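/- arXiv:1702.05816 — 4 statements merged into one kernel-verified Lean document; each statement's English description precedes it below -/
import Mathlib

section
/- Let p ≥ 1 and q be integers with gcd(p,q) = 1, let θ = e^{2πi/p}, let (z,w) ∈ S³, and let k be an integer not divisible by p. Then the Euclidean distance in ℂ² between (θ^{kq} z, θ^k w) and (z,w) satisfies ‖(θ^{kq} z − z, θ^k w − w)‖ ≥ |θ − 1| = 2 sin(π/p). -/
open Real Complex

private lemma chord_sq (p : ℤ) (hp : 1 ≤ p) (n : ℤ) :
    ‖(Complex.exp (2 * Real.pi * Complex.I / p)) ^ n - 1‖ ^ 2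
      = 2 - 2 * Real.cos (2 * Real.pi * n / p) := by
  have hp0 : (p : ℂ) ≠ 0 := by exact_mod_cast (by omega : p ≠ 0)
  have hxp : ((2 * Real.pi * n / p : ℝ) : ℂ) * Complex.I
      = (n : ℂ) * (2 * Real.pi * Complex.I / p) := by
    push_cast
    field_simp
  have h1 : (Complex.exp (2 * Real.pi * Complex.I / p)) ^ n
      = Complex.exp (((2 * Real.pi * n / p : ℝ) : ℂ) * Complex.I) := by
    rw [hxp, Complex.exp_int_mul]
  rw [h1, Complex.sq_norm, Complex.normSq_apply]
  set x : ℝ := 2 * Real.pi * n / p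
  simp only [Complex.sub_re, Complex.sub_im, Complex.exp_ofReal_mul_I_re,
    Complex.exp_ofReal_mul_I_im, Complex.one_re, Complex.one_im]
  nlinarith [Real.sin_sq_add_cos_sq x]

private lemma cos_bound (p : ℤ) (hp : 2 ≤ p) (n : ℤ) (hn : ¬ p ∣ n) :
    Real.cos (2 * Real.pi * n / p) ≤ Real.cos (2 * Real.pi / p) := by
  have hp0 : (0 : ℝ) < (p : ℝ) := by exact_mod_cast (by omega : (0:ℤ) < p)
  set r : ℤ := n % p with hr
  have hr0 : 0 ≤ r := Int.emod_nonneg n (by omega)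
  have hrp : r < p := Int.emod_lt_of_pos n (by omega)
  have hr1 : 1 ≤ r := by
    rcases eq_or_lt_of_le hr0 with h | h
    · exact absurd (Int.dvd_of_emod_eq_zero h.symm) hn
    · omega
  have hkey : Real.cos (2 * Real.pi * n / p) = Real.cos (2 * Real.pi * r / p) := by
    set m : ℤ := n / p with hm
    have hn' : (n : ℝ) = (r : ℝ) + (m : ℝ) * p := by
      have h := Int.emod_add_mul_ediv n p
      have h2 : ((n % p + p * (n / p) : ℤ) : ℝ) = (n : ℝ) := by rw [h]
      push_cast at h2
      rw [hr, hm]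
      push_cast
      linarith
    rw [hn']
    have hstep : 2 * Real.pi * ((r : ℝ) + (m : ℝ) * p) / p
        = 2 * Real.pi * r / p + (m : ℝ) * (2 * Real.pi) := by
      field_simp
    rw [hstep, Real.cos_add_int_mul_two_pi]
  rw [hkey]
  have hrR : (1 : ℝ) ≤ (r : ℝ) := by exact_mod_cast hr1
  have hrpR : (r : ℝ) ≤ (p : ℝ) - 1 := by
    have : r ≤ p - 1 := by omega
    exact_mod_cast this
  have aux : ∀ s : ℝ, 1 ≤ s → 2 * Real.pi * s / p ≤ Real.pi →
      Real.cos (2 * Real.pi * s / p) ≤ Real.cos (2 * Real.pi / p) := by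
    intro s h1 h2
    apply Real.cos_le_cos_of_nonneg_of_le_pi (by positivity) h2
    rw [div_le_div_iff₀ hp0 hp0]
    nlinarith [Real.pi_pos, mul_nonneg (mul_nonneg (sub_nonneg.mpr h1) (by positivity : (0:ℝ) ≤ 2 * Real.pi)) hp0.le]
  rcases le_or_gt ((r : ℝ)) ((p : ℝ) / 2) with h | h
  · exact aux r hrR (by rw [div_le_iff₀ hp0]; nlinarith [Real.pi_pos])
  · have heq : 2 * Real.pi * (r : ℝ) / p = 2 * Real.pi - 2 * Real.pi * ((p : ℝ) - r) / p := by
      field_simp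
      ring
    rw [heq, Real.cos_two_pi_sub]
    exact aux ((p : ℝ) - r) (by linarith) (by rw [div_le_iff₀ hp0]; nlinarith [Real.pi_pos])

/-- Let `p ≥ 1` and `q` be integers with `gcd(p,q) = 1`, let
`θ = e^{2πi/p}`, let `(z,w) ∈ S³`, and let `k` be an integer not divisible by `p`.
Then the Euclidean distance in `ℂ²` between `(θ^{kq} z, θ^k w)` and `(z,w)` satisfies
`‖(θ^{kq} z − z, θ^k w − w)‖ ≥ |θ − 1| = 2 sin(π/p)`. -/
theorem lens_space_chordal_distance_bound (p q k : ℤ) (hp : 1 ≤ p)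
    (hpq : Int.gcd p q = 1) (hk : ¬ p ∣ k)
    (z w : ℂ) (hzw : ‖z‖ ^ 2 + ‖w‖ ^ 2 = 1)
    (θ : ℂ) (hθ : θ = Complex.exp (2 * Real.pi * Complex.I / p)) :
    Real.sqrt (‖θ ^ (k * q) * z - z‖ ^ 2 + ‖θ ^ k * w - w‖ ^ 2)
        ≥ ‖θ - 1‖ ∧
      ‖θ - 1‖ = 2 * Real.sin (Real.pi / p) := by
  have hp0 : (0 : ℝ) < (p : ℝ) := by exact_mod_cast (by omega : (0:ℤ) < p)
  have hp2 : 2 ≤ p := by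
    rcases eq_or_lt_of_le hp with h | h
    · exact absurd (h ▸ one_dvd k) hk
    · omega
  have hθ1 : θ = θ ^ (1 : ℤ) := (zpow_one θ).symm
  have hC : ‖θ - 1‖ ^ 2 = 2 - 2 * Real.cos (2 * Real.pi / p) := by
    rw [hθ1, hθ]
    have := chord_sq p hp 1
    simpa using this
  -- the equality part
  have hsin : Real.sin (Real.pi / p) ≥ 0 := by
    apply Real.sin_nonneg_of_nonneg_of_le_pi (by positivity)
    rw [div_le_iff₀ hp0]
    have hp1R : (1 : ℝ) ≤ (p : ℝ) := by exact_mod_cast hp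
    nlinarith [Real.pi_pos, mul_nonneg (sub_nonneg.mpr hp1R) Real.pi_pos.le]
  have hsq : ‖θ - 1‖ ^ 2 = (2 * Real.sin (Real.pi / p)) ^ 2 := by
    rw [hC]
    have h2 : 2 * Real.pi / (p : ℝ) = 2 * (Real.pi / p) := by ring
    rw [h2, Real.cos_two_mul]
    nlinarith [Real.sin_sq_add_cos_sq (Real.pi / p)]
  have heq : ‖θ - 1‖ = 2 * Real.sin (Real.pi / p) := by
    have h1 : ‖θ - 1‖ = Real.sqrt (‖θ - 1‖ ^ 2) :=
      (Real.sqrt_sq (norm_nonneg _)).symm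
    rw [h1, hsq, Real.sqrt_sq (by linarith)]
  refine ⟨?_, heq⟩
  -- the inequality part
  have hkq : ¬ p ∣ k * q := fun h => hk (Int.dvd_of_dvd_mul_left_of_gcd_one h hpq)
  have ha : ‖θ ^ (k * q) - 1‖ ^ 2 ≥ ‖θ - 1‖ ^ 2 := by
    rw [hC, hθ, chord_sq p hp (k * q)]
    have := cos_bound p hp2 (k * q) hkq
    linarith
  have hb : ‖θ ^ k - 1‖ ^ 2 ≥ ‖θ - 1‖ ^ 2 := by
    rw [hC, hθ, chord_sq p hp k]
    have := cos_bound p hp2 k hk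
    linarith
  have hza : ‖θ ^ (k * q) * z - z‖ = ‖θ ^ (k * q) - 1‖ * ‖z‖ := by
    rw [show θ ^ (k * q) * z - z = (θ ^ (k * q) - 1) * z by ring, norm_mul]
  have hwa : ‖θ ^ k * w - w‖ = ‖θ ^ k - 1‖ * ‖w‖ := by
    rw [show θ ^ k * w - w = (θ ^ k - 1) * w by ring, norm_mul]
  have hsum : ‖θ ^ (k * q) * z - z‖ ^ 2 + ‖θ ^ k * w - w‖ ^ 2
      ≥ ‖θ - 1‖ ^ 2 := by
    rw [hza, hwa]
    have h1 : (‖θ ^ (k * q) - 1‖ * ‖z‖) ^ 2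
        = ‖θ ^ (k * q) - 1‖ ^ 2 * ‖z‖ ^ 2 := by ring
    have h2 : (‖θ ^ k - 1‖ * ‖w‖) ^ 2
        = ‖θ ^ k - 1‖ ^ 2 * ‖w‖ ^ 2 := by ring
    rw [h1, h2]
    nlinarith [sq_nonneg (‖z‖), sq_nonneg (‖w‖), ha, hb, hzw]
  calc Real.sqrt (‖θ ^ (k * q) * z - z‖ ^ 2 + ‖θ ^ k * w - w‖ ^ 2)
      ≥ Real.sqrt (‖θ - 1‖ ^ 2) := Real.sqrt_le_sqrt hsum
    _ = ‖θ - 1‖ := Real.sqrt_sq (norm_nonneg _)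
end

section
/- Let v₁, v₂ ∈ ℝ² be linearly independent, let L = ℤv₁ + ℤv₂, let d = |det(v₁,v₂)| be the covolume of L, and suppose λ > 0 is the minimum of ‖u‖ over nonzero u ∈ L. Then for every x ∈ ℝ² there exists u ∈ L with ‖x − u‖ ≤ λ/2 + d/(2λ). -/
/-- Let `v₁, v₂ ∈ ℝ²` be linearly independent, let `L = ℤv₁ + ℤv₂`,
let `d = |det(v₁,v₂)|` be the covolume of `L`, and suppose `λ > 0` is the minimum of
`‖u‖` over nonzero `u ∈ L`. Then for every `x ∈ ℝ²` there exists `u ∈ L` with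
`‖x − u‖ ≤ λ/2 + d/(2λ)`. -/
theorem lattice_covering_radius_bound (v₁ v₂ : EuclideanSpace ℝ (Fin 2))
    (hind : LinearIndependent ℝ ![v₁, v₂])
    (L : Set (EuclideanSpace ℝ (Fin 2)))
    (hL : L = {u | ∃ a b : ℤ, u = a • v₁ + b • v₂})
    (d : ℝ) (hd : d = |v₁ 0 * v₂ 1 - v₁ 1 * v₂ 0|)
    (lam : ℝ) (hlam : 0 < lam)
    (hmin : IsLeast {r : ℝ | ∃ u ∈ L, u ≠ 0 ∧ ‖u‖ = r} lam) :
    ∀ x : EuclideanSpace ℝ (Fin 2), ∃ u ∈ L, ‖x - u‖ ≤ lam / 2 + d / (2 * lam) := by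
  intro x
  obtain ⟨hmem, hlb⟩ := hmin
  obtain ⟨u₀, hu₀L, hu₀ne, hu₀norm⟩ := hmem
  rw [hL] at hu₀L
  obtain ⟨a, b, hab⟩ := hu₀L
  have hpair : ∀ s t : ℝ, s • v₁ + t • v₂ = 0 → s = 0 ∧ t = 0 :=
    LinearIndependent.pair_iff.mp hind
  -- determinant of (v₁, v₂) is nonzero
  have hDv : v₁ 0 * v₂ 1 - v₁ 1 * v₂ 0 ≠ 0 := by
    intro h0
    have h1 : v₂ 1 • v₁ + (-(v₁ 1)) • v₂ = 0 := by
      ext i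
      fin_cases i <;>
        simp [PiLp.add_apply, PiLp.smul_apply, smul_eq_mul] <;> nlinarith
    have h2 : v₂ 0 • v₁ + (-(v₁ 0)) • v₂ = 0 := by
      ext i
      fin_cases i <;>
        simp [PiLp.add_apply, PiLp.smul_apply, smul_eq_mul] <;> nlinarith
    obtain ⟨e1, e2⟩ := hpair _ _ h1
    obtain ⟨e3, e4⟩ := hpair _ _ h2
    have hv₂ : v₂ = 0 := by
      ext i; fin_cases i
      · simpa using e3
      · simpa using e1
    have := hpair 0 1 (by simp [hv₂])
    exact one_ne_zero this.2
  -- a, b not both zero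
  have habne : ¬(a = 0 ∧ b = 0) := by
    rintro ⟨rfl, rfl⟩
    simp at hab
    exact hu₀ne hab
  -- gcd a b = 1
  have hgpos : 0 < Int.gcd a b := by
    rw [Int.gcd_pos_iff]
    by_contra h
    push_neg at h
    exact habne ⟨h.1, h.2⟩
  have hg1 : Int.gcd a b = 1 := by
    set g : ℕ := Int.gcd a b with hg
    obtain ⟨a', ha'⟩ := (Int.gcd_dvd_left a b : ((Int.gcd a b : ℤ)) ∣ a)
    obtain ⟨b', hb'⟩ := (Int.gcd_dvd_right a b : ((Int.gcd a b : ℤ)) ∣ b)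
    set u' : EuclideanSpace ℝ (Fin 2) := (a' : ℤ) • v₁ + (b' : ℤ) • v₂ with hu'
    have hsmul : (g : ℤ) • u' = u₀ := by
      rw [hab, hu', smul_add, smul_smul, smul_smul, ← ha', ← hb']
    have hu'ne : u' ≠ 0 := by
      intro h
      rw [h, smul_zero] at hsmul
      exact hu₀ne hsmul.symm
    have hu'L : u' ∈ L := by
      rw [hL]; exact ⟨a', b', rfl⟩
    have hle : lam ≤ ‖u'‖ := hlb ⟨u', hu'L, hu'ne, rfl⟩
    have hnorm : ‖u₀‖ = (g : ℝ) * ‖u'‖ := by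
      rw [← hsmul, ← Int.cast_smul_eq_zsmul ℝ, norm_smul]
      simp
    have : (g : ℝ) * lam ≤ lam := by
      calc (g : ℝ) * lam ≤ (g : ℝ) * ‖u'‖ := by
            apply mul_le_mul_of_nonneg_left hle (by positivity)
        _ = lam := by rw [← hnorm, hu₀norm]
      
    have hgle : (g : ℝ) ≤ 1 := by
      nlinarith
    have : g ≤ 1 := by exact_mod_cast hgle
    omega
  -- Bezout
  have hbez : (1 : ℤ) = a * Int.gcdA a b + b * Int.gcdB a b := by
    rw [← Int.gcd_eq_gcd_ab, hg1]; norm_num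
  set c : ℤ := -(Int.gcdB a b) with hc
  set e : ℤ := Int.gcdA a b with he
  have hdet1 : a * e - b * c = 1 := by rw [he, hc]; linarith [hbez]
  -- real coordinates
  set r0 := v₁ 0 with hr0
  set r1 := v₁ 1 with hr1
  set s0 := v₂ 0 with hs0
  set s1 := v₂ 1 with hs1
  set P0 : ℝ := (a : ℝ) * r0 + (b : ℝ) * s0 with hP0
  set P1 : ℝ := (a : ℝ) * r1 + (b : ℝ) * s1 with hP1
  set w0 : ℝ := (c : ℝ) * r0 + (e : ℝ) * s0 with hw0
  set w1 : ℝ := (c : ℝ) * r1 + (e : ℝ) * s1 with hw1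
  set D : ℝ := r0 * s1 - r1 * s0 with hD
  have hDw : P0 * w1 - P1 * w0 = D := by
    have : ((a * e - b * c : ℤ) : ℝ) = 1 := by rw [hdet1]; norm_num
    push_cast at this
    rw [hP0, hP1, hw0, hw1, hD]
    linear_combination (r0 * s1 - r1 * s0) * this
  have hDne : D ≠ 0 := hDv
  have hdabs : d = |D| := hd
  have hdpos : 0 < d := by
    rw [hdabs]; exact abs_pos.mpr hDne
  -- norm of u₀ in coordinates
  have hu₀0 : u₀ 0 = P0 := by
    rw [hab]
    simp [PiLp.add_apply, PiLp.smul_apply, hP0, hr0, hs0]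
  have hu₀1 : u₀ 1 = P1 := by
    rw [hab]
    simp [PiLp.add_apply, PiLp.smul_apply, hP1, hr1, hs1]
  have hlamsq : P0 ^ 2 + P1 ^ 2 = lam ^ 2 := by
    have h1 : ‖u₀‖ = Real.sqrt (∑ i, ‖u₀ i‖ ^ 2) := EuclideanSpace.norm_eq u₀
    rw [Fin.sum_univ_two, hu₀0, hu₀1, hu₀norm] at h1
    have h2 : lam ^ 2 = (Real.sqrt (‖P0‖ ^ 2 + ‖P1‖ ^ 2)) ^ 2 := by rw [← h1]
    rw [Real.sq_sqrt (by positivity)] at h2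
    simp only [Real.norm_eq_abs, sq_abs] at h2
    linarith
  -- choose integers
  set q : ℤ := round ((P0 * x 1 - P1 * x 0) / D) with hq
  set y0 : ℝ := x 0 - (q : ℝ) * w0 with hy0
  set y1 : ℝ := x 1 - (q : ℝ) * w1 with hy1
  set p : ℤ := round ((P0 * y0 + P1 * y1) / lam ^ 2) with hp
  refine ⟨((p * a + q * c : ℤ)) • v₁ + ((p * b + q * e : ℤ)) • v₂, ?_, ?_⟩
  · rw [hL]; exact ⟨_, _, rfl⟩
  · set u : EuclideanSpace ℝ (Fin 2) :=
      ((p * a + q * c : ℤ)) • v₁ + ((p * b + q * e : ℤ)) • v₂ with hu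
    set z0 : ℝ := x 0 - u 0 with hz0
    set z1 : ℝ := x 1 - u 1 with hz1
    have hu0 : u 0 = (p : ℝ) * P0 + (q : ℝ) * w0 := by
      rw [hu]
      simp [PiLp.add_apply, PiLp.smul_apply, hP0, hw0]
      push_cast
      ring
    have hu1 : u 1 = (p : ℝ) * P1 + (q : ℝ) * w1 := by
      rw [hu]
      simp [PiLp.add_apply, PiLp.smul_apply, hP1, hw1]
      push_cast
      ring
    -- bound on the normal component
    have hNb : |P0 * z1 - P1 * z0| ≤ d / 2 := by
      have h1 : P0 * z1 - P1 * z0 = (P0 * x 1 - P1 * x 0) - (q : ℝ) * D := by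
        rw [hz0, hz1, hu0, hu1, ← hDw]; ring
      have h2 : (P0 * x 1 - P1 * x 0) - (q : ℝ) * D
          = ((P0 * x 1 - P1 * x 0) / D - (q : ℝ)) * D := by
        field_simp
      rw [h1, h2, abs_mul]
      calc |((P0 * x 1 - P1 * x 0) / D - (q : ℝ))| * |D|
          ≤ (1 / 2) * |D| := by
            apply mul_le_mul_of_nonneg_right (abs_sub_round _) (abs_nonneg _)
        _ = d / 2 := by rw [hdabs]; ring
    -- bound on the tangential component
    have hEb : |P0 * z0 + P1 * z1| ≤ lam ^ 2 / 2 := by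
      have h1 : P0 * z0 + P1 * z1 = (P0 * y0 + P1 * y1) - (p : ℝ) * lam ^ 2 := by
        rw [hz0, hz1, hu0, hu1, hy0, hy1, ← hlamsq]; ring
      have h2 : (P0 * y0 + P1 * y1) - (p : ℝ) * lam ^ 2
          = ((P0 * y0 + P1 * y1) / lam ^ 2 - (p : ℝ)) * lam ^ 2 := by
        field_simp
      rw [h1, h2, abs_mul]
      calc |((P0 * y0 + P1 * y1) / lam ^ 2 - (p : ℝ))| * |lam ^ 2|
          ≤ (1 / 2) * |lam ^ 2| := by
            apply mul_le_mul_of_nonneg_right (abs_sub_round _) (abs_nonneg _)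
        _ = lam ^ 2 / 2 := by rw [abs_of_pos (by positivity)]; ring
    -- combine
    have e0 : (x - u) 0 = z0 := rfl
    have e1 : (x - u) 1 = z1 := rfl
    have hnx : ‖x - u‖ = Real.sqrt (z0 ^ 2 + z1 ^ 2) := by
      rw [EuclideanSpace.norm_eq, Fin.sum_univ_two, e0, e1]
      simp only [Real.norm_eq_abs, sq_abs]
    clear_value z0 z1
    have hid : (P0 * z0 + P1 * z1) ^ 2 + (P0 * z1 - P1 * z0) ^ 2
        = (z0 ^ 2 + z1 ^ 2) * lam ^ 2 := by
      linear_combination (z0 ^ 2 + z1 ^ 2) * hlamsq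
    have hb : z0 ^ 2 + z1 ^ 2 ≤ (lam / 2 + d / (2 * lam)) ^ 2 := by
      have h1 : (P0 * z0 + P1 * z1) ^ 2 ≤ (lam ^ 2 / 2) ^ 2 := by
        rw [← sq_abs]; exact pow_le_pow_left₀ (abs_nonneg _) hEb 2
      have h2 : (P0 * z1 - P1 * z0) ^ 2 ≤ (d / 2) ^ 2 := by
        rw [← sq_abs]; exact pow_le_pow_left₀ (abs_nonneg _) hNb 2
      have hsq : (lam / 2 + d / (2 * lam)) ^ 2 * lam ^ 2
          = (lam ^ 2 / 2) ^ 2 + (d / 2) ^ 2 + lam ^ 2 * d / 2 := by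
        field_simp
        ring
      have hpos : (0:ℝ) ≤ lam ^ 2 * d / 2 := by positivity
      have hle : (z0 ^ 2 + z1 ^ 2) * lam ^ 2
          ≤ (lam / 2 + d / (2 * lam)) ^ 2 * lam ^ 2 := by
        rw [← hid, hsq]; linarith
      have hl2 : (0:ℝ) < lam ^ 2 := by positivity
      exact le_of_mul_le_mul_right hle hl2
    rw [hnx]
    have : Real.sqrt (z0 ^ 2 + z1 ^ 2) ≤ Real.sqrt ((lam / 2 + d / (2 * lam)) ^ 2) :=
      Real.sqrt_le_sqrt hb
    rwa [Real.sqrt_sq (by positivity)] at this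
end

section
/- Let (p_l, q_l) be a sequence of pairs of integers with p_l → ∞, 1 ≤ q_l < p_l and gcd(p_l, q_l) = 1, and let L_l = {(a + k q_l/p_l, b + k/p_l) : a, b, k ∈ ℤ} ⊂ ℝ². Then there is a subsequence along which one of the following holds: (1) sup_{x ∈ [0,1]²} dist(x, L_l) → 0 (the lattices become dense, so the orbits on each Clifford torus become dense); or (2) there exist a nonzero vector (m₀, n₀) ∈ ℤ² and a positive integer b, independent of l, such that for every l in the subsequence there are points c_{l,1}, …, c_{l,b} ∈ ℝ² with L_l ⊆ ⋃_{i=1}^{b} (c_{l,i} + ℝ·(m₀, n₀) + ℤ²), i.e. each L_l is contained in b families of parallel lines with direction (m₀, n₀) modulo ℤ². -/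
lemma pigeon (P Q : ℤ) (N : ℕ) (hN : 0 < N) (hP : 0 < P) (hp : (N:ℤ)^2 < P) :
    ∃ m n : ℤ, ¬(m = 0 ∧ n = 0) ∧ P ∣ (m - n*Q) ∧ |m| * N < P ∧ |n| * N < P := by
  have hPR : (0:ℝ) < (P:ℝ) := by exact_mod_cast hP
  have hNR : (0:ℝ) < (N:ℝ) := by exact_mod_cast hN
  set f : ℕ → ℕ × ℕ := fun k =>
    ((⌊(N:ℝ) * Int.fract ((k*Q:ℤ) / (P:ℝ))⌋).toNat, (⌊(N:ℝ) * Int.fract ((k:ℝ) / P)⌋).toNat) with hf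
  have hmaps : ∀ k ∈ Finset.range (N^2+1), f k ∈ Finset.range N ×ˢ Finset.range N := by
    intro k _
    have h1 : ∀ x : ℝ, (⌊(N:ℝ) * Int.fract x⌋).toNat < N := by
      intro x
      have h0 : (0:ℝ) ≤ Int.fract x := Int.fract_nonneg x
      have h1 : Int.fract x < 1 := Int.fract_lt_one x
      have hlt : ⌊(N:ℝ) * Int.fract x⌋ < (N:ℤ) := Int.floor_lt.2 (by push_cast; nlinarith)
      omega
    simp only [Finset.mem_product, Finset.mem_range]
    exact ⟨h1 _, h1 _⟩
  have hcard : (Finset.range N ×ˢ Finset.range N).card < (Finset.range (N^2+1)).card := by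
    simp [pow_two]
  obtain ⟨k1, k2, hk1, hk2, hlt, heq⟩ :
      ∃ k1 k2, k1 < N^2+1 ∧ k2 < N^2+1 ∧ k1 < k2 ∧ f k1 = f k2 := by
    obtain ⟨a, ha, b, hb, hne, heq⟩ :=
      Finset.exists_ne_map_eq_of_card_lt_of_maps_to hcard hmaps
    simp only [Finset.mem_range] at ha hb
    rcases Ne.lt_or_gt hne with h | h
    · exact ⟨a, b, ha, hb, h, heq⟩
    · exact ⟨b, a, hb, ha, h, heq.symm⟩
  have hfloor : ∀ x y : ℝ, (0:ℝ) ≤ x → 0 ≤ y → (⌊x⌋).toNat = (⌊y⌋).toNat → |x - y| < 1 := by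
    intro x y hx hy h
    have hx0 : (0:ℤ) ≤ ⌊x⌋ := Int.floor_nonneg.2 hx
    have hy0 : (0:ℤ) ≤ ⌊y⌋ := Int.floor_nonneg.2 hy
    have hfe : ⌊x⌋ = ⌊y⌋ := by omega
    have l1 := Int.floor_le x
    have l2 := Int.lt_floor_add_one x
    have l3 := Int.floor_le y
    have l4 := Int.lt_floor_add_one y
    rw [hfe] at l1 l2
    rw [abs_lt]
    exact ⟨by linarith, by linarith⟩
  have hfr1 : |(N:ℝ) * Int.fract ((k2*Q:ℤ) / (P:ℝ)) - (N:ℝ) * Int.fract ((k1*Q:ℤ) / (P:ℝ))| < 1 := by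
    apply hfloor
    · exact mul_nonneg hNR.le (Int.fract_nonneg _)
    · exact mul_nonneg hNR.le (Int.fract_nonneg _)
    · exact (congrArg Prod.fst heq.symm)
  have hfr2 : |(N:ℝ) * Int.fract ((k2:ℝ) / P) - (N:ℝ) * Int.fract ((k1:ℝ) / P)| < 1 := by
    apply hfloor
    · exact mul_nonneg hNR.le (Int.fract_nonneg _)
    · exact mul_nonneg hNR.le (Int.fract_nonneg _)
    · exact (congrArg Prod.snd heq.symm)
  set m : ℤ := (k2 - k1 : ℤ)*Q - (⌊((k2*Q:ℤ):ℝ)/P⌋ - ⌊((k1*Q:ℤ):ℝ)/P⌋)*P with hm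
  set n : ℤ := (k2 - k1 : ℤ) - (⌊(k2:ℝ)/P⌋ - ⌊(k1:ℝ)/P⌋)*P with hn
  have hmval : (m:ℝ) = P * (Int.fract ((k2*Q:ℤ) / (P:ℝ)) - Int.fract ((k1*Q:ℤ) / (P:ℝ))) := by
    rw [Int.fract, Int.fract]
    push_cast [hm]
    field_simp
    ring
  have hnval : (n:ℝ) = P * (Int.fract ((k2:ℝ) / P) - Int.fract ((k1:ℝ) / P)) := by
    rw [Int.fract, Int.fract]
    push_cast [hn]
    field_simp
    ring
  refine ⟨m, n, ?_, ?_, ?_, ?_⟩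
  · rintro ⟨-, hn0⟩
    have hE : ((k2:ℤ) - k1) = (⌊(k2:ℝ)/P⌋ - ⌊(k1:ℝ)/P⌋)*P := by
      have := hn0 ▸ hn
      linarith [this]
    have hd : P ∣ ((k2:ℤ) - k1) := ⟨⌊(k2:ℝ)/P⌋ - ⌊(k1:ℝ)/P⌋, by linarith [hE]⟩
    have h1 : (0:ℤ) < (k2:ℤ) - k1 := by
      have : (k1:ℤ) < k2 := by exact_mod_cast hlt
      omega
    have h2 : (k2:ℤ) - k1 < P := by
      have : (k2:ℤ) ≤ (N:ℤ)^2 := by exact_mod_cast Nat.lt_succ_iff.mp hk2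
      omega
    have := Int.le_of_dvd h1 hd
    omega
  · exact ⟨(⌊(k2:ℝ)/P⌋ - ⌊(k1:ℝ)/P⌋)*Q - (⌊((k2*Q:ℤ):ℝ)/P⌋ - ⌊((k1*Q:ℤ):ℝ)/P⌋), by rw [hm, hn]; ring⟩
  · have h : |(m:ℝ)| * N < P := by
      rw [hmval, abs_mul, abs_of_pos hPR]
      rw [← mul_sub, abs_mul, abs_of_pos hNR] at hfr1
      nlinarith [abs_nonneg (Int.fract ((k2*Q:ℤ) / (P:ℝ)) - Int.fract ((k1*Q:ℤ) / (P:ℝ)))]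
    exact_mod_cast h
  · have h : |(n:ℝ)| * N < P := by
      rw [hnval, abs_mul, abs_of_pos hPR]
      rw [← mul_sub, abs_mul, abs_of_pos hNR] at hfr2
      nlinarith [abs_nonneg (Int.fract ((k2:ℝ) / P) - Int.fract ((k1:ℝ) / P))]
    exact_mod_cast h

-- every lattice point with zero "determinant" against w is an integer multiple of w
lemma mult_of_det_zero (P Q : ℤ) (hP : 0 < P)
    (m n : ℤ) (hw : P ∣ m - n*Q) (hw0 : ¬(m = 0 ∧ n = 0))
    (hmin : ∀ m' n' : ℤ, P ∣ m' - n'*Q → ¬(m' = 0 ∧ n' = 0) → m^2 + n^2 ≤ m'^2 + n'^2)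
    (mz nz : ℤ) (hz : P ∣ mz - nz*Q) (hdet : m*nz - n*mz = 0) :
    ∃ k : ℤ, mz = k*m ∧ nz = k*n := by
  -- real scalar t with (mz,nz) = t (m,n)
  obtain ⟨t, ht1, ht2⟩ : ∃ t : ℝ, (mz:ℝ) = t*m ∧ (nz:ℝ) = t*n := by
    by_cases hm : m = 0
    · have hn : n ≠ 0 := fun h => hw0 ⟨hm, h⟩
      refine ⟨(nz:ℝ)/n, ?_, ?_⟩
      · have : n * mz = 0 := by rw [hm] at hdet; linarith [hdet]
        have : mz = 0 := by
          rcases mul_eq_zero.1 this with h | h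
          · exact absurd h hn
          · exact h
        rw [this, hm]; push_cast; ring
      · have hnR : (n:ℝ) ≠ 0 := by exact_mod_cast hn
        field_simp
    · refine ⟨(mz:ℝ)/m, ?_, ?_⟩
      · have hmR : (m:ℝ) ≠ 0 := by exact_mod_cast hm
        field_simp
      · have hmR : (m:ℝ) ≠ 0 := by exact_mod_cast hm
        have : (m:ℝ) * nz = n * mz := by exact_mod_cast congrArg (Int.cast : ℤ → ℝ) (by linarith [hdet] : m*nz = n*mz)
        field_simp
        linarith [this]
  refine ⟨⌊t⌋, ?_, ?_⟩
  -- remainder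
  · by_contra hne
    have hr : ¬(mz - ⌊t⌋*m = 0 ∧ nz - ⌊t⌋*n = 0) ∨ True := Or.inr trivial
    -- r = fract t • w
    have hrm : ((mz - ⌊t⌋*m : ℤ):ℝ) = Int.fract t * m := by
      rw [Int.fract]; push_cast; rw [ht1]; ring
    have hrn : ((nz - ⌊t⌋*n : ℤ):ℝ) = Int.fract t * n := by
      rw [Int.fract]; push_cast; rw [ht2]; ring
    have hfr0 : Int.fract t ≠ 0 := by
      intro h
      rw [h] at hrm
      have h0 : ((mz - ⌊t⌋*m : ℤ):ℝ) = 0 := by rw [hrm]; ring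
      have : mz - ⌊t⌋*m = 0 := by exact_mod_cast h0
      omega
    have hrz : P ∣ (mz - ⌊t⌋*m) - (nz - ⌊t⌋*n)*Q := by
      have : (mz - ⌊t⌋*m) - (nz - ⌊t⌋*n)*Q = (mz - nz*Q) - ⌊t⌋*(m - n*Q) := by ring
      rw [this]
      exact dvd_sub hz (Dvd.dvd.mul_left hw _)
    have hrnz : ¬(mz - ⌊t⌋*m = 0 ∧ nz - ⌊t⌋*n = 0) := by
      rintro ⟨h1, h2⟩
      rw [h1] at hrm
      rw [h2] at hrn
      rcases mul_eq_zero.1 (hrm.symm.trans (by push_cast; ring) : Int.fract t * (m:ℝ) = 0) with h | h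
      · exact hfr0 h
      · rcases mul_eq_zero.1 (hrn.symm.trans (by push_cast; ring) : Int.fract t * (n:ℝ) = 0) with h' | h'
        · exact hfr0 h'
        · exact hw0 ⟨by exact_mod_cast h, by exact_mod_cast h'⟩
    have hle := hmin _ _ hrz hrnz
    -- cast to ℝ and contradict: r² = fract² * w² < w²
    have hleR : ((m:ℝ)^2 + n^2) ≤ (Int.fract t * m)^2 + (Int.fract t * n)^2 := by
      rw [← hrm, ← hrn]
      exact_mod_cast hle
    have hw2 : (0:ℝ) < (m:ℝ)^2 + n^2 := by
      rcases (not_and_or.1 hw0) with h | h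
      · have : (m:ℝ) ≠ 0 := by exact_mod_cast h
        positivity
      · have : (n:ℝ) ≠ 0 := by exact_mod_cast h
        positivity
    have hf1 : Int.fract t < 1 := Int.fract_lt_one t
    have hf0 : 0 ≤ Int.fract t := Int.fract_nonneg t
    have hsq : Int.fract t ^ 2 < 1 := by nlinarith
    nlinarith [mul_pos hw2 (sub_pos.2 hsq), hleR]
  · by_contra hne
    -- same as above; derive fract t = 0 would give nz = ⌊t⌋ n; so fract t ≠ 0
    have hrm : ((mz - ⌊t⌋*m : ℤ):ℝ) = Int.fract t * m := by
      rw [Int.fract]; push_cast; rw [ht1]; ring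
    have hrn : ((nz - ⌊t⌋*n : ℤ):ℝ) = Int.fract t * n := by
      rw [Int.fract]; push_cast; rw [ht2]; ring
    have hfr0 : Int.fract t ≠ 0 := by
      intro h
      rw [h] at hrn
      have h0 : ((nz - ⌊t⌋*n : ℤ):ℝ) = 0 := by rw [hrn]; ring
      have : nz - ⌊t⌋*n = 0 := by exact_mod_cast h0
      omega
    have hrz : P ∣ (mz - ⌊t⌋*m) - (nz - ⌊t⌋*n)*Q := by
      have : (mz - ⌊t⌋*m) - (nz - ⌊t⌋*n)*Q = (mz - nz*Q) - ⌊t⌋*(m - n*Q) := by ring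
      rw [this]
      exact dvd_sub hz (Dvd.dvd.mul_left hw _)
    have hrnz : ¬(mz - ⌊t⌋*m = 0 ∧ nz - ⌊t⌋*n = 0) := by
      rintro ⟨h1, h2⟩
      rw [h2] at hrn
      rcases mul_eq_zero.1 (hrn.symm.trans (by push_cast; ring) : Int.fract t * (n:ℝ) = 0) with h' | h'
      · exact hfr0 h'
      · rw [h1] at hrm
        rcases mul_eq_zero.1 (hrm.symm.trans (by push_cast; ring) : Int.fract t * (m:ℝ) = 0) with h | h
        · exact hfr0 h
        · exact hw0 ⟨by exact_mod_cast h, by exact_mod_cast h'⟩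
    have hle := hmin _ _ hrz hrnz
    have hleR : ((m:ℝ)^2 + n^2) ≤ (Int.fract t * m)^2 + (Int.fract t * n)^2 := by
      rw [← hrm, ← hrn]
      exact_mod_cast hle
    have hw2 : (0:ℝ) < (m:ℝ)^2 + n^2 := by
      rcases (not_and_or.1 hw0) with h | h
      · have : (m:ℝ) ≠ 0 := by exact_mod_cast h
        positivity
      · have : (n:ℝ) ≠ 0 := by exact_mod_cast h
        positivity
    have hf1 : Int.fract t < 1 := Int.fract_lt_one t
    have hf0 : 0 ≤ Int.fract t := Int.fract_nonneg t
    have hsq : Int.fract t ^ 2 < 1 := by nlinarith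
    nlinarith [mul_pos hw2 (sub_pos.2 hsq), hleR]

lemma basis_lemma (P Q : ℤ) (hP : 0 < P)
    (m n : ℤ) (hw : P ∣ m - n*Q) (hw0 : ¬(m = 0 ∧ n = 0))
    (hmin : ∀ m' n' : ℤ, P ∣ m' - n'*Q → ¬(m' = 0 ∧ n' = 0) → m^2 + n^2 ≤ m'^2 + n'^2) :
    ∃ my ny : ℤ, P ∣ my - ny*Q ∧ m*ny - n*my = P := by
  obtain ⟨c, hc⟩ := hw
  set G : ℕ := Int.gcd n c with hG
  have hbez : (G:ℤ) = n * Int.gcdA n c + c * Int.gcdB n c := Int.gcd_eq_gcd_ab n c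
  set A := Int.gcdA n c
  set B := Int.gcdB n c
  have hG0 : G ≠ 0 := by
    intro h
    obtain ⟨hn0, hc0⟩ := Int.gcd_eq_zero_iff.1 h
    apply hw0
    constructor
    · rw [hn0, hc0] at hc
      simpa using hc
    · exact hn0
  set my : ℤ := -A*P + B*Q with hmy
  set ny : ℤ := B with hny
  have hyΛ : P ∣ my - ny*Q := ⟨-A, by rw [hmy, hny]; ring⟩
  have hDy : m*ny - n*my = P*G := by
    rw [hmy, hny, hbez]
    have : m = n*Q + P*c := by omega
    rw [this]; ring
  -- decomposition claim
  have struct : ∀ mz nz : ℤ, P ∣ mz - nz*Q → ∃ k j : ℤ, mz = k*m + j*my ∧ nz = k*n + j*ny := by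
    intro mz nz hz
    have hw : P ∣ m - n*Q := ⟨c, hc⟩
    obtain ⟨a, ha⟩ := hz
    have hDz : m*nz - n*mz = P*(nz*c - n*a) := by
      have h1 : m = n*Q + P*c := by linarith [hc]
      have h2 : mz = nz*Q + P*a := by linarith [ha]
      rw [h1, h2]; ring
    have hGd : (G:ℤ) ∣ (nz*c - n*a) := by
      apply dvd_sub
      · exact Dvd.dvd.mul_left (Int.gcd_dvd_right n c) nz
      · exact Dvd.dvd.mul_right (Int.gcd_dvd_left n c) a
    obtain ⟨j, hj⟩ := hGd
    have hm2 : P ∣ (mz - j*my) - (nz - j*ny)*Q := by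
      have : (mz - j*my) - (nz - j*ny)*Q = (mz - nz*Q) - j*(my - ny*Q) := by ring
      rw [this]
      exact dvd_sub ⟨a, ha⟩ (Dvd.dvd.mul_left hyΛ _)
    have hdet0 : m*(nz - j*ny) - n*(mz - j*my) = 0 := by
      have : m*(nz - j*ny) - n*(mz - j*my) = (m*nz - n*mz) - j*(m*ny - n*my) := by ring
      rw [this, hDz, hDy, hj]; ring
    obtain ⟨k, hk1, hk2⟩ := mult_of_det_zero P Q hP m n hw hw0 hmin _ _ hm2 hdet0
    exact ⟨k, j, by linarith [hk1], by linarith [hk2]⟩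
  -- apply to (P,0) and (Q,1)
  obtain ⟨k1, j1, e1, e2⟩ := struct P 0 ⟨1, by ring⟩
  obtain ⟨k2, j2, e3, e4⟩ := struct Q 1 ⟨0, by ring⟩
  have hPG : P = (k1*j2 - j1*k2) * (P * G) := by
    have expand : P * 1 - 0 * Q = (k1*m + j1*my)*(k2*n + j2*ny) - (k1*n + j1*ny)*(k2*m + j2*my) := by
      rw [← e1, ← e2, ← e3, ← e4]
    have h2 : P = (k1*j2 - j1*k2) * (m*ny - n*my) := by linear_combination expand
    rw [hDy] at h2
    exact h2
  have hKG : (k1*j2 - j1*k2) * G = 1 := by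
    have hP' : (P:ℤ) ≠ 0 := by omega
    have h : P * ((k1*j2 - j1*k2) * (G:ℤ)) = P * 1 := by
      linear_combination (-1 : ℤ) * hPG
    exact mul_left_cancel₀ hP' h
  have hG1 : (G:ℤ) = 1 := by
    have hdvd : (G:ℤ) ∣ 1 := ⟨k1*j2 - j1*k2, by linear_combination (-1:ℤ) * hKG⟩
    exact Int.eq_one_of_dvd_one (by positivity) hdvd
  exact ⟨my, ny, hyΛ, by rw [hDy, hG1]; ring⟩

lemma covering (P Q m n my ny : ℤ) (hP : 0 < P)
    (hw : P ∣ m - n*Q) (hy : P ∣ my - ny*Q) (hdet : m*ny - n*my = P)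
    (x0 x1 : ℝ) :
    ∃ mz nz : ℤ, P ∣ mz - nz*Q ∧
      (x0 - mz/P)^2 + (x1 - nz/P)^2 ≤ ((m:ℝ)^2+n^2)/(4*P^2) + 1/(4*((m:ℝ)^2+n^2)) := by
  have hPR : (0:ℝ) < P := by exact_mod_cast hP
  have hS0 : (0:ℝ) < (m:ℝ)^2 + n^2 := by
    have : ¬(m = 0 ∧ n = 0) := by
      rintro ⟨h1, h2⟩
      rw [h1, h2] at hdet
      omega
    rcases not_and_or.1 this with h | h
    · have : (m:ℝ) ≠ 0 := by exact_mod_cast h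
      positivity
    · have : (n:ℝ) ≠ 0 := by exact_mod_cast h
      positivity
  set S : ℝ := (m:ℝ)^2 + n^2 with hSdef
  have hd : ((m:ℝ)*ny - n*my) = P := by exact_mod_cast hdet
  set j : ℤ := round ((m:ℝ)*x1 - n*x0) with hj
  set k : ℤ := round ((P*((m:ℝ)*x0 + n*x1) - j*((m:ℝ)*my + n*ny)) / S) with hk
  refine ⟨k*m + j*my, k*n + j*ny, ?_, ?_⟩
  · have : k*m + j*my - (k*n + j*ny)*Q = k*(m - n*Q) + j*(my - ny*Q) := by ring
    rw [this]
    exact dvd_add (Dvd.dvd.mul_left hw k) (Dvd.dvd.mul_left hy j)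
  · set u0 : ℝ := x0 - (k*m + j*my : ℤ)/P with hu0
    set u1 : ℝ := x1 - (k*n + j*ny : ℤ)/P with hu1
    have key : ((m:ℝ)*((k*n + j*ny : ℤ):ℝ) - n*((k*m + j*my : ℤ):ℝ))/P = j := by
      rw [div_eq_iff (ne_of_gt hPR)]
      push_cast
      linear_combination (j:ℝ)*hd
    have he1 : (m:ℝ)*u1 - n*u0 = ((m:ℝ)*x1 - n*x0) - j := by
      rw [hu0, hu1, ← key]; ring
    have key2 : ((m:ℝ)*((k*m + j*my : ℤ):ℝ) + n*((k*n + j*ny : ℤ):ℝ))/P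
        = (S/P) * (k + j*((m:ℝ)*my + n*ny)/S) := by
      rw [div_eq_iff (ne_of_gt hPR)]
      push_cast
      field_simp
      ring
    have he0 : (m:ℝ)*u0 + n*u1 = (S/P) * ((P*((m:ℝ)*x0 + n*x1) - j*((m:ℝ)*my + n*ny)) / S - k) := by
      rw [hu0, hu1]
      field_simp
      push_cast; rw [hSdef]; ring
    have hb1 : |(m:ℝ)*u1 - n*u0| ≤ 1/2 := by
      rw [he1]; exact abs_sub_round _
    have hb0 : |(m:ℝ)*u0 + n*u1| ≤ S/(2*P) := by
      rw [he0, abs_mul, abs_of_pos (by positivity : (0:ℝ) < S/P)]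
      have h2 := abs_sub_round ((P*((m:ℝ)*x0 + n*x1) - j*((m:ℝ)*my + n*ny)) / S)
      have h3 : |(P*((m:ℝ)*x0 + n*x1) - j*((m:ℝ)*my + n*ny)) / S - k| ≤ 1/2 := h2
      calc S/P * |(P*((m:ℝ)*x0 + n*x1) - j*((m:ℝ)*my + n*ny)) / S - (k:ℝ)|
          ≤ S/P * (1/2) := mul_le_mul_of_nonneg_left h3 (by positivity)
        _ = S/(2*P) := by ring
    have hlag : u0^2 + u1^2 = (((m:ℝ)*u0 + n*u1)^2 + ((m:ℝ)*u1 - n*u0)^2)/S := by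
      field_simp
      ring
    rw [hlag]
    have h1 : ((m:ℝ)*u0 + n*u1)^2 ≤ (S/(2*P))^2 := sq_le_sq' (abs_le.1 hb0).1 (abs_le.1 hb0).2
    have h2 : ((m:ℝ)*u1 - n*u0)^2 ≤ (1/2)^2 := sq_le_sq' (abs_le.1 hb1).1 (abs_le.1 hb1).2
    have hsum := add_le_add h1 h2
    calc (((m:ℝ)*u0 + n*u1)^2 + ((m:ℝ)*u1 - n*u0)^2)/S
        ≤ ((S/(2*P))^2 + (1/2)^2)/S := by gcongr
      _ = S/(4*P^2) + 1/(4*S) := by field_simp; ring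

set_option maxHeartbeats 1000000 in
lemma key (P Q : ℤ) (hP : 0 < P) (N M : ℕ) (hN : 0 < N) (hM : 0 < M)
    (hp : (N:ℤ)^2 < P)
    (hno : ∀ m n : ℤ, ¬(m = 0 ∧ n = 0) → |m| ≤ M → |n| ≤ M → ¬ ((P:ℤ) ∣ n*Q - m))
    (x0 x1 : ℝ) :
    ∃ mz nz : ℤ, P ∣ mz - nz*Q ∧
      (x0 - mz/P)^2 + (x1 - nz/P)^2 ≤ 1/(2*(N:ℝ)^2) + 1/(4*(M:ℝ)^2) := by
  obtain ⟨m0, n0, h00, h0d, h0m, h0n⟩ := pigeon P Q N hN hP hp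
  -- minimal vector
  set T : Set ℕ := {v | ∃ m n : ℤ, P ∣ m - n*Q ∧ ¬(m = 0 ∧ n = 0) ∧ v = (m^2 + n^2).toNat} with hT
  have hTne : T.Nonempty := ⟨(m0^2 + n0^2).toNat, m0, n0, h0d, h00, rfl⟩
  obtain ⟨m, n, hw, hw0, hv⟩ := Nat.sInf_mem hTne
  have hmin : ∀ m' n' : ℤ, P ∣ m' - n'*Q → ¬(m' = 0 ∧ n' = 0) → m^2 + n^2 ≤ m'^2 + n'^2 := by
    intro m' n' h1 h2
    have hmem : (m'^2 + n'^2).toNat ∈ T := ⟨m', n', h1, h2, rfl⟩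
    have hle := Nat.sInf_le hmem
    rw [hv] at hle
    have e1 : (0:ℤ) ≤ m^2 + n^2 := by positivity
    have e2 : (0:ℤ) ≤ m'^2 + n'^2 := by positivity
    omega
  -- size bounds
  have hsize : (m^2 + n^2) * (N:ℤ)^2 < 2*P^2 := by
    have h1 := hmin m0 n0 h0d h00
    have e1 : |m0| * |m0| * ((N:ℤ)*N) < P * P := by
      have a1 : (0:ℤ) ≤ |m0| * N := mul_nonneg (abs_nonneg _) (by positivity)
      nlinarith [h0m, abs_nonneg m0, (by positivity : (0:ℤ) ≤ (N:ℤ))]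
    have e2 : |n0| * |n0| * ((N:ℤ)*N) < P * P := by
      have a1 : (0:ℤ) ≤ |n0| * N := mul_nonneg (abs_nonneg _) (by positivity)
      nlinarith [h0n, abs_nonneg n0, (by positivity : (0:ℤ) ≤ (N:ℤ))]
    have a2 : m0^2 = |m0| * |m0| := by rw [abs_mul_abs_self]; ring
    have a3 : n0^2 = |n0| * |n0| := by rw [abs_mul_abs_self]; ring
    nlinarith [h1]
  have hMlow : (M:ℤ)^2 < m^2 + n^2 := by
    have : ¬(|m| ≤ (M:ℤ) ∧ |n| ≤ (M:ℤ)) := by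
      rintro ⟨h1, h2⟩
      exact hno m n hw0 h1 h2 (by obtain ⟨c, hc⟩ := hw; exact ⟨-c, by linarith [hc]⟩)
    rcases not_and_or.1 this with h | h
    · push_neg at h
      nlinarith [abs_nonneg n, sq_abs m, sq_abs n, h, sq_nonneg n]
    · push_neg at h
      nlinarith [abs_nonneg m, sq_abs m, sq_abs n, h]
  obtain ⟨my, ny, hy, hdet⟩ := basis_lemma P Q hP m n hw hw0 hmin
  obtain ⟨mz, nz, hzd, hzb⟩ := covering P Q m n my ny hP hw hy hdet x0 x1
  refine ⟨mz, nz, hzd, hzb.trans ?_⟩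
  -- real bounds
  have hPR : (0:ℝ) < P := by exact_mod_cast hP
  have hNR : (0:ℝ) < N := by exact_mod_cast hN
  have hMR : (0:ℝ) < M := by exact_mod_cast hM
  have hSR : (0:ℝ) < (m:ℝ)^2 + n^2 := by
    have : ((M:ℝ))^2 < (m:ℝ)^2 + n^2 := by exact_mod_cast hMlow
    nlinarith
  have hs1 : ((m:ℝ)^2 + n^2)/(4*P^2) ≤ 1/(2*(N:ℝ)^2) := by
    have h1 : ((m:ℝ)^2 + n^2) * (N:ℝ)^2 ≤ 2*P^2 := by
      have h2 : ((m^2 + n^2) * (N:ℤ)^2 : ℝ) ≤ ((2*P^2 : ℤ) : ℝ) := by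
        exact_mod_cast hsize.le
      push_cast at h2
      linarith
    have hN2 : (0:ℝ) < (N:ℝ)^2 := by positivity
    calc ((m:ℝ)^2 + n^2)/(4*P^2)
        = (((m:ℝ)^2 + n^2) * (N:ℝ)^2)/(4*P^2*(N:ℝ)^2) := by
          rw [div_eq_div_iff (by positivity) (by positivity)]
          ring
      _ ≤ (2*P^2)/(4*P^2*(N:ℝ)^2) := by gcongr
      _ = 1/(2*(N:ℝ)^2) := by
          rw [div_eq_div_iff (by positivity) (by positivity)]
          ring
  have hs2 : 1/(4*((m:ℝ)^2 + n^2)) ≤ 1/(4*(M:ℝ)^2) := by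
    have h1 : ((M:ℝ))^2 < (m:ℝ)^2 + n^2 := by exact_mod_cast hMlow
    apply div_le_div_of_nonneg_left (by norm_num) (by positivity)
    nlinarith
  linarith

open Filter Topology

/-- Let `(p_l, q_l)` be a sequence of pairs of integers with
`p_l → ∞`, `1 ≤ q_l < p_l` and `gcd(p_l, q_l) = 1`, and let
`L_l = {(a + k q_l/p_l, b + k/p_l) : a, b, k ∈ ℤ} ⊂ ℝ²`. Then there is a subsequence
along which one of the following holds: (1) `sup_{x ∈ [0,1]²} dist(x, L_l) → 0`
(the lattices become dense); or (2) there exist a nonzero vector `(m₀, n₀) ∈ ℤ²` and a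
positive integer `b`, independent of `l`, such that for every `l` in the subsequence
there are points `c_{l,1}, …, c_{l,b} ∈ ℝ²` with
`L_l ⊆ ⋃_{i=1}^{b} (c_{l,i} + ℝ·(m₀, n₀) + ℤ²)`. -/
theorem lens_orbit_dichotomy (p q : ℕ → ℤ)
    (hq : ∀ l, 1 ≤ q l ∧ q l < p l)
    (hgcd : ∀ l, Int.gcd (p l) (q l) = 1)
    (hp : Tendsto (fun l => p l) atTop atTop)
    (L : ℕ → Set (EuclideanSpace ℝ (Fin 2)))
    (hL : ∀ l, L l = {x | ∃ a b k : ℤ,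
        x 0 = (a : ℝ) + (k : ℝ) * (q l : ℝ) / (p l : ℝ) ∧ x 1 = (b : ℝ) + (k : ℝ) / (p l : ℝ)}) :
    ∃ φ : ℕ → ℕ, StrictMono φ ∧
      (Tendsto (fun l => ⨆ x : {x : EuclideanSpace ℝ (Fin 2) //
            x 0 ∈ Set.Icc (0 : ℝ) 1 ∧ x 1 ∈ Set.Icc (0 : ℝ) 1},
            Metric.infDist x.1 (L (φ l))) atTop (𝓝 0)
        ∨ ∃ m₀ n₀ : ℤ, ¬ (m₀ = 0 ∧ n₀ = 0) ∧ ∃ b : ℕ, 0 < b ∧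
            ∀ l, ∃ c : Fin b → EuclideanSpace ℝ (Fin 2),
              L (φ l) ⊆ ⋃ i : Fin b, {x | ∃ (t : ℝ) (a a' : ℤ),
                x 0 = c i 0 + t * m₀ + a ∧ x 1 = c i 1 + t * n₀ + a'}) := by
  have hppos : ∀ l, 0 < p l := fun l => by have := (hq l).1; have := (hq l).2; omega
  by_cases hc : ∀ M : ℕ, {l | ∃ m n : ℤ, ¬(m = 0 ∧ n = 0) ∧ |m| ≤ (M:ℤ) ∧ |n| ≤ (M:ℤ) ∧
      (p l) ∣ (n * q l - m)}.Finite
  · -- dense case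
    refine ⟨id, strictMono_id, Or.inl ?_⟩
    haveI hne : Nonempty {x : EuclideanSpace ℝ (Fin 2) //
        x 0 ∈ Set.Icc (0 : ℝ) 1 ∧ x 1 ∈ Set.Icc (0 : ℝ) 1} :=
      ⟨⟨0, by simp, by simp⟩⟩
    have hnonneg : ∀ l, 0 ≤ ⨆ x : {x : EuclideanSpace ℝ (Fin 2) //
        x 0 ∈ Set.Icc (0 : ℝ) 1 ∧ x 1 ∈ Set.Icc (0 : ℝ) 1},
        Metric.infDist x.1 (L l) :=
      fun l => Real.iSup_nonneg (fun x => Metric.infDist_nonneg)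
    rw [tendsto_order]
    constructor
    · intro a ha
      exact Eventually.of_forall (fun l => lt_of_lt_of_le ha (hnonneg l))
    · intro a ha
      set K : ℕ := ⌈1/a⌉₊ + 1 with hK
      have hK0 : 0 < K := by omega
      have hKa : 1/a < (K:ℝ) := by
        rw [hK]
        push_cast
        linarith [Nat.le_ceil (1/a)]
      have hKR : (0:ℝ) < K := lt_trans (by positivity) hKa
      have h1 : ∀ᶠ l in atTop, ((K:ℤ)^2) < p l := hp.eventually_gt_atTop _
      have h2 : {l | ∃ m n : ℤ, ¬(m = 0 ∧ n = 0) ∧ |m| ≤ (K:ℤ) ∧ |n| ≤ (K:ℤ) ∧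
          (p l) ∣ (n * q l - m)}ᶜ ∈ (atTop : Filter ℕ) := by
        rw [← Nat.cofinite_eq_atTop]
        exact (hc K).compl_mem_cofinite
      filter_upwards [h1, h2] with l hl1 hl2
      have hno : ∀ m n : ℤ, ¬(m = 0 ∧ n = 0) → |m| ≤ (K:ℤ) → |n| ≤ (K:ℤ) →
          ¬ ((p l) ∣ n * q l - m) := by
        intro m n a1 a2 a3 a4
        exact hl2 ⟨m, n, a1, a2, a3, a4⟩
      have hBlt : 1/(2*(K:ℝ)^2) + 1/(4*(K:ℝ)^2) < a^2 := by
        have hKa1 : 1 < (K:ℝ) * a := by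
          exact (div_lt_iff₀ ha).1 hKa
        rw [div_add_div _ _ (by positivity) (by positivity)]
        rw [div_lt_iff₀ (by positivity)]
        nlinarith [sq_nonneg ((K:ℝ)*a - 1)]
      have hbound : ∀ x : {x : EuclideanSpace ℝ (Fin 2) //
          x 0 ∈ Set.Icc (0 : ℝ) 1 ∧ x 1 ∈ Set.Icc (0 : ℝ) 1},
          Metric.infDist x.1 (L l) ≤ Real.sqrt (1/(2*(K:ℝ)^2) + 1/(4*(K:ℝ)^2)) := by
        intro x
        obtain ⟨mz, nz, hdvd, hbd⟩ := key (p l) (q l) (hppos l) K K hK0 hK0 hl1 hno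
          (x.1 0) (x.1 1)
        set z : EuclideanSpace ℝ (Fin 2) :=
          (WithLp.equiv 2 (Fin 2 → ℝ)).symm ![(mz:ℝ)/(p l), (nz:ℝ)/(p l)] with hz
        have hzmem : z ∈ L l := by
          rw [hL l]
          obtain ⟨cc, hcc⟩ := hdvd
          refine ⟨cc, 0, nz, ?_, ?_⟩
          · have hPne : ((p l : ℤ):ℝ) ≠ 0 := by
              exact_mod_cast (hppos l).ne'
            have hccR : ((mz:ℝ) - nz * q l) = (p l : ℝ) * cc := by exact_mod_cast hcc
            rw [hz]
            simp only [WithLp.equiv_symm_apply, PiLp.toLp_apply, Matrix.cons_val_zero]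
            field_simp
            linarith [hccR]
          · have hPne : ((p l : ℤ):ℝ) ≠ 0 := by exact_mod_cast (hppos l).ne'
            rw [hz]
            simp only [WithLp.equiv_symm_apply, PiLp.toLp_apply, Matrix.cons_val_one, Matrix.head_cons]
            push_cast
            field_simp
            ring
        have hdist : dist x.1 z =
            Real.sqrt ((x.1 0 - (mz:ℝ)/(p l))^2 + (x.1 1 - (nz:ℝ)/(p l))^2) := by
          rw [EuclideanSpace.dist_eq, Fin.sum_univ_two]
          congr 1
          rw [hz]
          simp [Real.dist_eq, sq_abs]
        calc Metric.infDist x.1 (L l) ≤ dist x.1 z := Metric.infDist_le_dist_of_mem hzmem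
          _ = Real.sqrt ((x.1 0 - (mz:ℝ)/(p l))^2 + (x.1 1 - (nz:ℝ)/(p l))^2) := hdist
          _ ≤ Real.sqrt (1/(2*(K:ℝ)^2) + 1/(4*(K:ℝ)^2)) := Real.sqrt_le_sqrt hbd
      calc (⨆ x : {x : EuclideanSpace ℝ (Fin 2) //
            x 0 ∈ Set.Icc (0 : ℝ) 1 ∧ x 1 ∈ Set.Icc (0 : ℝ) 1},
            Metric.infDist x.1 (L l))
          ≤ Real.sqrt (1/(2*(K:ℝ)^2) + 1/(4*(K:ℝ)^2)) := ciSup_le hbound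
        _ < a := (Real.sqrt_lt' ha).2 hBlt
  · -- line case
    obtain ⟨M, hMinf⟩ := not_forall.1 hc
    have hMinf' : {l | ∃ m n : ℤ, ¬(m = 0 ∧ n = 0) ∧ |m| ≤ (M:ℤ) ∧ |n| ≤ (M:ℤ) ∧
        (p l) ∣ (n * q l - m)}.Infinite := hMinf
    obtain ⟨m, n, hmn0, hSinf⟩ : ∃ m n : ℤ, ¬(m = 0 ∧ n = 0) ∧
        {l | (p l) ∣ n * q l - m}.Infinite := by
      by_contra hcon
      push_neg at hcon
      apply hMinf'
      have hsub : {l | ∃ m n : ℤ, ¬(m = 0 ∧ n = 0) ∧ |m| ≤ (M:ℤ) ∧ |n| ≤ (M:ℤ) ∧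
          (p l) ∣ (n * q l - m)} ⊆
          ⋃ mn ∈ ((Finset.Icc (-(M:ℤ)) M ×ˢ Finset.Icc (-(M:ℤ)) M : Finset (ℤ × ℤ)) : Set (ℤ × ℤ)),
            {l | ¬(mn.1 = 0 ∧ mn.2 = 0) ∧ (p l) ∣ (mn.2 * q l - mn.1)} := by
        rintro l ⟨m, n, h0, hm, hn, hd⟩
        rw [Set.mem_iUnion]
        refine ⟨(m, n), ?_⟩
        rw [Set.mem_iUnion]
        refine ⟨?_, h0, hd⟩
        simp only [Finset.coe_product, Set.mem_prod, Finset.mem_coe, Finset.mem_Icc]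
        rw [abs_le] at hm hn
        exact ⟨⟨hm.1, hm.2⟩, ⟨hn.1, hn.2⟩⟩
      apply Set.Finite.subset _ hsub
      apply Set.Finite.biUnion ((Finset.Icc (-(M:ℤ)) M ×ˢ Finset.Icc (-(M:ℤ)) M).finite_toSet)
      intro mn _
      by_cases h0 : (mn.1 = 0 ∧ mn.2 = 0)
      · refine Set.Finite.subset (Set.finite_empty) ?_
        rintro l ⟨h1, -⟩
        exact absurd h0 h1
      · have := hcon mn.1 mn.2 (fun h1 h2 => h0 ⟨h1, h2⟩)
        exact this.subset (fun l hl => hl.2)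
    set S := {l | (p l) ∣ n * q l - m} with hSdef
    haveI : Infinite S := Set.infinite_coe_iff.2 hSinf
    set φ : ℕ → ℕ := fun k => ((Nat.Subtype.orderIsoOfNat S k : S) : ℕ) with hφ
    have hφmono : StrictMono φ := by
      intro a b hab
      have := (Nat.Subtype.orderIsoOfNat S).strictMono hab
      exact_mod_cast this
    have hφS : ∀ k, (p (φ k)) ∣ n * q (φ k) - m := fun k => (Nat.Subtype.orderIsoOfNat S k).2
    refine ⟨φ, hφmono, Or.inr ⟨m, n, hmn0, Int.gcd m n, ?_, ?_⟩⟩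
    · exact Nat.pos_of_ne_zero (fun h => hmn0 (Int.gcd_eq_zero_iff.1 h))
    · intro l
      set P : ℤ := p (φ l) with hPdef
      set Q : ℤ := q (φ l) with hQdef
      have hPpos : 0 < P := hppos (φ l)
      have hPR : (0:ℝ) < P := by exact_mod_cast hPpos
      have hdvd : P ∣ n*Q - m := hφS l
      set g : ℕ := Int.gcd m n with hgdef
      have hg0 : 0 < g := Nat.pos_of_ne_zero (fun h => hmn0 (Int.gcd_eq_zero_iff.1 h))
      have hgZ : (0:ℤ) < g := by exact_mod_cast hg0
      have hSR0 : (0:ℝ) < (m:ℝ)^2 + (n:ℝ)^2 := by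
        rcases not_and_or.1 hmn0 with h | h
        · have : (m:ℝ) ≠ 0 := by exact_mod_cast h
          positivity
        · have : (n:ℝ) ≠ 0 := by exact_mod_cast h
          positivity
      refine ⟨fun i => (WithLp.equiv 2 (Fin 2 → ℝ)).symm
        ![((i:ℕ):ℝ)*(n:ℝ)/((m:ℝ)^2 + (n:ℝ)^2), -(((i:ℕ):ℝ)*(m:ℝ))/((m:ℝ)^2 + (n:ℝ)^2)], ?_⟩
      intro x hx
      rw [hL (φ l)] at hx
      obtain ⟨a, b, k, hx0, hx1⟩ := hx
      obtain ⟨cc, hcc⟩ := hdvd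
      have hccR : (n:ℝ)*Q - m = (P:ℝ)*cc := by exact_mod_cast hcc
      set s : ℤ := n*a - m*b + k*cc with hsdef
      have hs : (s:ℝ) = n * x 0 - m * x 1 := by
        have hx0' : x 0 = (a:ℝ) + (k:ℝ)*(Q:ℝ)/(P:ℝ) := hx0
        have hx1' : x 1 = (b:ℝ) + (k:ℝ)/(P:ℝ) := hx1
        have hPne : (P:ℝ) ≠ 0 := hPR.ne'
        have hc' : (cc:ℝ) = ((n:ℝ)*Q - m)/P := by rw [hccR, mul_div_cancel_left₀ _ hPne]
        rw [hsdef, hx0', hx1']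
        push_cast
        rw [hc']
        ring
      set i : ℤ := s % g with hidef
      have hi0 : 0 ≤ i := Int.emod_nonneg s (by exact_mod_cast hg0.ne')
      have hig : i < g := Int.emod_lt_of_pos s hgZ
      have hiF : i.toNat < g := by omega
      rw [Set.mem_iUnion]
      refine ⟨⟨i.toNat, hiF⟩, ?_⟩
      have hbez : (g:ℤ) = m * Int.gcdA m n + n * Int.gcdB m n := Int.gcd_eq_gcd_ab m n
      set u : ℤ := s / g with hu
      have hdiv : (g:ℤ) * u + i = s := Int.mul_ediv_add_emod s g
      have h5 : s - i = (g:ℤ)*u := by linarith [hdiv]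
      set A' : ℤ := Int.gcdB m n * u with hA'
      set B' : ℤ := -(Int.gcdA m n) * u with hB'
      have hAB : n*A' - m*B' = s - i := by
        rw [hA', hB']
        linear_combination (-1:ℤ) * h5 + (-u) * hbez
      -- coordinates of c
      have hc0 : ((WithLp.equiv 2 (Fin 2 → ℝ)).symm
          ![((i.toNat:ℕ):ℝ)*(n:ℝ)/((m:ℝ)^2 + (n:ℝ)^2),
            -(((i.toNat:ℕ):ℝ)*(m:ℝ))/((m:ℝ)^2 + (n:ℝ)^2)] : EuclideanSpace ℝ (Fin 2)) 0
          = (i:ℝ)*(n:ℝ)/((m:ℝ)^2 + (n:ℝ)^2) := by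
        simp only [WithLp.equiv_symm_apply, PiLp.toLp_apply, Matrix.cons_val_zero]
        congr 2
        exact_mod_cast congrArg (Int.cast : ℤ → ℝ) (Int.toNat_of_nonneg hi0)
      have hc1 : ((WithLp.equiv 2 (Fin 2 → ℝ)).symm
          ![((i.toNat:ℕ):ℝ)*(n:ℝ)/((m:ℝ)^2 + (n:ℝ)^2),
            -(((i.toNat:ℕ):ℝ)*(m:ℝ))/((m:ℝ)^2 + (n:ℝ)^2)] : EuclideanSpace ℝ (Fin 2)) 1
          = -((i:ℝ)*(m:ℝ))/((m:ℝ)^2 + (n:ℝ)^2) := by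
        simp only [WithLp.equiv_symm_apply, PiLp.toLp_apply, Matrix.cons_val_one, Matrix.head_cons,
          Matrix.cons_val_zero]
        congr 3
        exact_mod_cast congrArg (Int.cast : ℤ → ℝ) (Int.toNat_of_nonneg hi0)
      simp only [Set.mem_setOf_eq, hc0, hc1]
      set c0 : ℝ := (i:ℝ)*(n:ℝ)/((m:ℝ)^2 + (n:ℝ)^2) with hcc0
      set c1 : ℝ := -((i:ℝ)*(m:ℝ))/((m:ℝ)^2 + (n:ℝ)^2) with hcc1
      set E0 : ℝ := x 0 - c0 - A' with hE0
      set E1 : ℝ := x 1 - c1 - B' with hE1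
      have hkey : (n:ℝ)*E0 - (m:ℝ)*E1 = 0 := by
        rw [hE0, hE1, hcc0, hcc1]
        have hci : (n:ℝ)*((i:ℝ)*(n:ℝ)/((m:ℝ)^2 + (n:ℝ)^2))
            - (m:ℝ)*(-((i:ℝ)*(m:ℝ))/((m:ℝ)^2 + (n:ℝ)^2)) = i := by
          field_simp
          ring
        have hABR : (n:ℝ)*A' - m*B' = (s:ℝ) - i := by exact_mod_cast hAB
        linear_combination -hs - hci - hABR
      by_cases hm : m = 0
      · have hn : n ≠ 0 := fun h => hmn0 ⟨hm, h⟩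
        have hnR : (n:ℝ) ≠ 0 := by exact_mod_cast hn
        refine ⟨E1/(n:ℝ), A', B', ?_, ?_⟩
        · have hE00 : E0 = 0 := by
            rw [hm] at hkey
            push_cast at hkey
            rcases mul_eq_zero.1 (by linarith [hkey] : (n:ℝ)*E0 = 0) with h | h
            · exact absurd h hnR
            · exact h
          rw [hm]
          push_cast
          have := hE00
          rw [hE0] at this
          linarith [this]
        · rw [hE1] at *
          field_simp
          ring
      · have hmR : (m:ℝ) ≠ 0 := by exact_mod_cast hm
        refine ⟨E0/(m:ℝ), A', B', ?_, ?_⟩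
        · rw [hE0] at *
          field_simp
          ring
        · have hE1e : E1 = (n:ℝ)*E0/(m:ℝ) := by
            field_simp
            linarith [hkey]
          have := hE1e
          rw [hE1] at this
          rw [div_mul_eq_mul_div, mul_comm]
          linarith [this, (by field_simp : E0/(m:ℝ)*(n:ℝ) = (n:ℝ)*E0/(m:ℝ))]
end

section
/- Let p ≥ 4 be an integer. If r ∈ (0, π/2) and s ∈ (0, π/2) satisfy the two equations (2π²/p) sin² r = 2πs − π sin(2s) and (2π²/p) sin(2r) = 4π sin² s, then s ≤ π/p. -/
lemma sin_ge_sub_cube {x : ℝ} (hx : 0 ≤ x) : x - x ^ 3 / 6 ≤ Real.sin x := by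
  have h : Monotone (fun x : ℝ => Real.sin x - x + x ^ 3 / 6) := by
    apply monotone_of_deriv_nonneg
    · fun_prop
    · intro y
      have hd : HasDerivAt (fun x : ℝ => Real.sin x - x + x ^ 3 / 6)
          (Real.cos y - 1 + (3 : ℕ) * y ^ 2 / 6) y := by
        have := ((Real.hasDerivAt_sin y).sub (hasDerivAt_id y)).add
          ((hasDerivAt_pow 3 y).div_const 6)
        exact this.congr_deriv (by norm_num)
      rw [hd.deriv]
      nlinarith [Real.one_sub_sq_div_two_le_cos (x := y)]
  have h2 := h hx
  simp only [Real.sin_zero] at h2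
  nlinarith [h2]

lemma cos_le_quartic {x : ℝ} (hx : 0 ≤ x) : Real.cos x ≤ 1 - x ^ 2 / 2 + x ^ 4 / 24 := by
  have h : MonotoneOn (fun x : ℝ => 1 - x ^ 2 / 2 + x ^ 4 / 24 - Real.cos x) (Set.Ici 0) := by
    apply monotoneOn_of_deriv_nonneg (convex_Ici 0)
    · fun_prop
    · fun_prop
    · intro y hy
      rw [interior_Ici] at hy
      have hd : HasDerivAt (fun x : ℝ => 1 - x ^ 2 / 2 + x ^ 4 / 24 - Real.cos x)
          (0 - (2 : ℕ) * y ^ 1 / 2 + (4 : ℕ) * y ^ 3 / 24 - (-Real.sin y)) y := by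
        have := (((hasDerivAt_const y (1:ℝ)).sub ((hasDerivAt_pow 2 y).div_const 2)).add
          ((hasDerivAt_pow 4 y).div_const 24)).sub (Real.hasDerivAt_cos y)
        exact this.congr_deriv (by norm_num)
      rw [hd.deriv]
      have := sin_ge_sub_cube (le_of_lt hy)
      push_cast
      nlinarith
  have h2 := h (Set.mem_Ici.2 le_rfl) (Set.mem_Ici.2 hx) hx
  simp only [Real.cos_zero] at h2
  nlinarith [h2]


lemma case1_aux {s : ℝ} (h0 : 0 < s) (h76 : s ≤ 19/25) (h : Real.sin s ^ 4 < 2/3 * s^4) :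
    False := by
  have e1 : (0:ℝ) ≤ 19/25 - s := by linarith
  have hsin_lb : (9037/10000 : ℝ) * s ≤ Real.sin s := by
    have h6 := sin_ge_sub_cube h0.le
    nlinarith [h6, mul_nonneg e1 (mul_pos h0 h0).le, mul_nonneg e1 h0.le]
  have h9 : ((9037/10000 : ℝ) * s)^4 ≤ Real.sin s ^ 4 :=
    pow_le_pow_left₀ (mul_nonneg (by norm_num) h0.le) hsin_lb 4
  rw [mul_pow] at h9
  have hc4 : (6669/10000 : ℝ) ≤ ((9037:ℝ)/10000)^4 := by norm_num
  have hm := mul_le_mul_of_nonneg_right hc4 (pow_nonneg h0.le 4)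
  have hpos : (0:ℝ) < s^4 := pow_pos h0 4
  linarith

lemma case2_aux {s : ℝ} (h76 : 19/25 < s) (h2 : s < Real.pi / 2)
    (h : Real.sin s ^ 2 < s / 2) : False := by
  have hπ : 0 < Real.pi := Real.pi_pos
  have hcos2s : Real.cos (2*s) = 1 - 2 * Real.sin s ^ 2 := by
    rw [Real.cos_two_mul]
    have := Real.sin_sq_add_cos_sq s
    linarith
  have hcle : Real.cos (2*s) ≤ 1 - s := by
    rcases le_or_gt (2*s) (27/10) with h27 | h27
    · have hq := cos_le_quartic (x := 2*s) (by linarith)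
      have e1 : (0:ℝ) ≤ 2*s - 38/25 := by linarith
      have e2 : (0:ℝ) ≤ 27/10 - 2*s := by linarith
      nlinarith [hq, mul_nonneg e1 e2, mul_nonneg (mul_nonneg e1 e2) e1,
        mul_nonneg (mul_nonneg e1 e2) e2]
    · have hw := Real.one_sub_sq_div_two_le_cos (x := Real.pi - 2*s)
      rw [Real.cos_pi_sub] at hw
      have hπlt : Real.pi < 3.141593 := Real.pi_lt_d6
      nlinarith [hw, h27, h2, hπlt, hπ]
  rw [hcos2s] at hcle
  linarith

/-- Let `p ≥ 4` be an integer. If `r ∈ (0, π/2)` and `s ∈ (0, π/2)`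
satisfy `(2π²/p) sin² r = 2πs − π sin(2s)` and `(2π²/p) sin(2r) = 4π sin² s`
(a Clifford torus and a geodesic sphere in `L(p,q)` enclosing the same volume and
having the same area), then `s ≤ π/p`. -/
theorem transition_radius_bound (p : ℕ) (hp : 4 ≤ p) (r s : ℝ)
    (hr : r ∈ Set.Ioo 0 (Real.pi / 2)) (hs : s ∈ Set.Ioo 0 (Real.pi / 2))
    (hvol : (2 * Real.pi ^ 2 / p) * Real.sin r ^ 2
      = 2 * Real.pi * s - Real.pi * Real.sin (2 * s))
    (harea : (2 * Real.pi ^ 2 / p) * Real.sin (2 * r) = 4 * Real.pi * Real.sin s ^ 2) :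
    s ≤ Real.pi / p := by
  have hπ : 0 < Real.pi := Real.pi_pos
  have hp0 : (0:ℝ) < p := by exact_mod_cast Nat.lt_of_lt_of_le (by norm_num) hp
  have hpne : (p:ℝ) ≠ 0 := hp0.ne'
  have hs0 : 0 < s := hs.1
  have hs2 : s < Real.pi / 2 := hs.2
  -- clear denominators in the hypotheses
  rw [div_mul_eq_mul_div, div_eq_iff hpne] at hvol harea
  rw [Real.sin_two_mul] at harea
  -- π (sin r cos r) = p sin² s
  have hxy : Real.pi * (Real.sin r * Real.cos r) = (p:ℝ) * Real.sin s ^ 2 := by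
    apply mul_left_cancel₀ (a := 4 * Real.pi) (by positivity)
    linear_combination harea
  -- 2π sin² r = p (2s − sin 2s)
  have hu : 2 * Real.pi * Real.sin r ^ 2 = (p:ℝ) * (2 * s - Real.sin (2 * s)) := by
    apply mul_left_cancel₀ (a := Real.pi) hπ.ne'
    linear_combination hvol
  have hpyth : Real.sin r ^ 2 + Real.cos r ^ 2 = 1 := Real.sin_sq_add_cos_sq r
  -- key identity
  have hkey : (p:ℝ)^2 * Real.sin s ^ 4
      = Real.pi ^ 2 * (Real.sin r ^ 2 * (1 - Real.sin r ^ 2)) := by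
    have hsq : ((p:ℝ) * Real.sin s ^ 2)^2 = (Real.pi * (Real.sin r * Real.cos r))^2 := by
      rw [hxy]
    linear_combination hsq + Real.pi ^ 2 * Real.sin r ^ 2 * hpyth
  have hu1 : Real.sin r ^ 2 ≤ 1 := Real.sin_sq_le_one r
  have hu0 : 0 ≤ Real.sin r ^ 2 := sq_nonneg _
  by_contra hcon
  push_neg at hcon
  have hps : Real.pi < (p:ℝ) * s := by
    rw [div_lt_iff₀ hp0] at hcon; linarith
  rcases le_or_gt s (19/25) with hc | hc
  · -- small s case
    have hA : 2 * (p:ℝ)^2 * Real.sin s ^ 4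
        ≤ Real.pi * ((p:ℝ) * (2 * s - Real.sin (2 * s))) := by
      nlinarith [hkey, hu, sq_nonneg (Real.pi * Real.sin r ^ 2)]
    have hsin2s : 2*s - (2*s) ^ 3 / 6 ≤ Real.sin (2*s) := sin_ge_sub_cube (by linarith)
    have t1 : 2*s - Real.sin (2*s) ≤ 4/3 * s^3 := by nlinarith [hsin2s]
    have t2 : Real.pi * ((p:ℝ) * (2*s - Real.sin (2*s)))
        ≤ Real.pi * ((p:ℝ) * (4/3 * s^3)) := by
      apply mul_le_mul_of_nonneg_left _ hπ.le
      exact mul_le_mul_of_nonneg_left t1 hp0.le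
    have t3 : Real.pi * ((p:ℝ) * (4/3 * s^3)) < ((p:ℝ)*s) * ((p:ℝ) * (4/3 * s^3)) := by
      apply mul_lt_mul_of_pos_right hps
      positivity
    have hslt : Real.sin s ^ 4 < 2/3 * s^4 := by
      have h5 : 2*(p:ℝ)^2 * Real.sin s ^ 4 < 2*(p:ℝ)^2 * (2/3 * s^4) := by nlinarith
      exact lt_of_mul_lt_mul_left h5 (by positivity)
    exact case1_aux hs0 hc hslt
  · -- large s case
    have hB : (p:ℝ)^2 * Real.sin s ^ 4 ≤ Real.pi^2 / 4 := by
      nlinarith [hkey, mul_nonneg (sq_nonneg Real.pi) (sq_nonneg (1 - 2*Real.sin r ^ 2))]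
    have hπ2 : Real.pi ^ 2 < ((p:ℝ)*s)^2 := by
      linarith [mul_self_lt_mul_self hπ.le hps]
    have hs4 : Real.sin s ^ 4 < s^2/4 := by
      have h5 : (p:ℝ)^2 * Real.sin s ^ 4 < (p:ℝ)^2 * (s^2/4) := by linarith [hB, hπ2]
      exact lt_of_mul_lt_mul_left h5 (by positivity)
    have hsin2 : Real.sin s ^ 2 < s / 2 := by
      by_contra h7
      push_neg at h7
      have hh : (s/2) * (s/2) ≤ Real.sin s ^ 2 * Real.sin s ^ 2 :=
        mul_le_mul h7 h7 (by linarith) (sq_nonneg _)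
      linarith [hh, hs4]
    exact case2_aux hc hs2 hsin2
end
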